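/- Let A be a commutative ring, J a finitely generated ideal. Define the weak completion A^† of A inside the J-adic completion Â as the union over ε > 0 of the subsets A_ε = {f ∈ Â : γ_ε(f) > −∞} (with respect to a fixed presentation by generators). Then A^† is a subring of Â: it is closed under addition and multiplication. -/

import Mathlib

/-- The `J`-adic valuation `v_J(a) = sup {n : a ∈ J^n} ∈ ℕ ∪ {∞}`, viewed in `EReal`. -/
noncomputable def vJ {A : Type*} [CommRing A] (J : Ideal A) (a : A) : EReal :=
  ⨆ n : {n : ℕ // a ∈ J ^ n}, ((n : ℕ) : EReal)

/-- The Gauss norm `γ_ε(∑_I a_I T^I) = inf_I (v_J(a_I) − ε·|I|)`. -/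
noncomputable def gaussNorm {A : Type*} [CommRing A] (J : Ideal A) {r : ℕ} (ε : ℝ)
    (f : MvPowerSeries (Fin r) A) : EReal :=
  ⨅ I : Fin r →₀ ℕ,
    (vJ J (MvPowerSeries.coeff I f) - ((ε * (I.sum fun _ n => (n : ℝ))) : ℝ))

/-- The weak completion `A^†` inside the `J`-adic completion (elements written as
convergent power series in the chosen generators): those `f` with `γ_ε(f) > −∞`
for some `ε > 0`. -/
def weakCompletion {A : Type*} [CommRing A] (J : Ideal A) (r : ℕ) :
    Set (MvPowerSeries (Fin r) A) :=
  {f | ∃ ε : ℝ, 0 < ε ∧ gaussNorm J ε f ≠ ⊥}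

lemma le_vJ {A : Type*} [CommRing A] {J : Ideal A} {a : A} {n : ℕ} (h : a ∈ J ^ n) :
    ((n : ℕ) : EReal) ≤ vJ J a :=
  le_iSup (fun m : {m : ℕ // a ∈ J ^ m} => ((m : ℕ) : EReal)) ⟨n, h⟩

lemma mem_pow_of_natCast_le_vJ {A : Type*} [CommRing A] {J : Ideal A} {a : A} {n : ℕ}
    (h : ((n : ℕ) : EReal) ≤ vJ J a) : a ∈ J ^ n := by
  by_contra hn
  rcases Nat.eq_zero_or_pos n with h0 | h0
  · subst h0; simp [Ideal.one_eq_top] at hn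
  have hub : vJ J a ≤ ((n - 1 : ℕ) : EReal) := by
    apply iSup_le
    rintro ⟨m, hm⟩
    have hmn : m ≤ n - 1 := by
      by_contra hmlt
      push_neg at hmlt
      exact hn (Ideal.pow_le_pow_right (by omega) hm)
    exact EReal.natCast_le_iff.mpr hmn
  have h2 : (n : ℕ) ≤ n - 1 := EReal.natCast_le_iff.mp (h.trans hub)
  omega

lemma mem_pow_floor {A : Type*} [CommRing A] {J : Ideal A} {a : A} {x : ℝ}
    (h : (x : EReal) ≤ vJ J a) : a ∈ J ^ ⌊x⌋₊ := by
  rcases le_or_gt x 0 with hx | hx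
  · simp [Nat.floor_of_nonpos hx, Ideal.one_eq_top]
  · apply mem_pow_of_natCast_le_vJ
    refine le_trans ?_ h
    have h1 : ((⌊x⌋₊ : ℝ)) ≤ x := Nat.floor_le hx.le
    rw [← EReal.coe_coe_eq_natCast]
    exact EReal.coe_le_coe_iff.mpr h1

lemma floor_le_vJ {A : Type*} [CommRing A] {J : Ideal A} {a : A} {x : ℝ}
    (h : a ∈ J ^ ⌊x⌋₊) : ((x - 1 : ℝ) : EReal) ≤ vJ J a := by
  refine le_trans ?_ (le_vJ h)
  have h1 : x - 1 ≤ (⌊x⌋₊ : ℝ) := (Nat.sub_one_lt_floor x).le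
  rw [← EReal.coe_coe_eq_natCast]
  exact EReal.coe_le_coe_iff.mpr h1

/-- Extract a uniform real lower bound from a non-`⊥` infimum. -/
lemma exists_real_le_of_iInf_ne_bot {ι : Type*} {u : ι → EReal} (h : (⨅ i, u i) ≠ ⊥) :
    ∃ c : ℝ, ∀ i, (c : EReal) ≤ u i := by
  have hb : (⊥ : EReal) < ⨅ i, u i := bot_lt_iff_ne_bot.mpr h
  obtain ⟨c, _, hc2⟩ := EReal.exists_between_coe_real hb
  exact ⟨c, fun i => hc2.le.trans (iInf_le _ i)⟩

/-- the weak completion `A^†` is closed under addition and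
multiplication, hence is a subring of the `J`-adic completion. -/
theorem weakCompletion_subring {A : Type*} [CommRing A] (J : Ideal A) (hJ : J.FG) (r : ℕ)
    (f g : MvPowerSeries (Fin r) A)
    (hf : f ∈ weakCompletion J r) (hg : g ∈ weakCompletion J r) :
    f + g ∈ weakCompletion J r ∧ f * g ∈ weakCompletion J r := by
  obtain ⟨ε₁, hε₁, hf'⟩ := hf
  obtain ⟨ε₂, hε₂, hg'⟩ := hg
  obtain ⟨c₁, hc₁⟩ := exists_real_le_of_iInf_ne_bot hf'
  obtain ⟨c₂, hc₂⟩ := exists_real_le_of_iInf_ne_bot hg'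
  set ε : ℝ := min ε₁ ε₂ with hε_def
  have hε : 0 < ε := lt_min hε₁ hε₂
  set S : (Fin r →₀ ℕ) → ℝ := fun I => I.sum fun _ n => (n : ℝ) with hS_def
  have hS_nonneg : ∀ I, 0 ≤ S I := fun I =>
    Finset.sum_nonneg (fun i hi => by positivity)
  have hS_add : ∀ I₁ I₂ : Fin r →₀ ℕ, S (I₁ + I₂) = S I₁ + S I₂ := fun I₁ I₂ =>
    Finsupp.sum_add_index' (fun i => by simp) (fun i b₁ b₂ => by push_cast; ring)
  -- coefficient-wise lower bounds
  have hcf : ∀ I, ((c₁ + ε₁ * S I : ℝ) : EReal) ≤ vJ J (MvPowerSeries.coeff I f) := by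
    intro I
    have := hc₁ I
    rwa [EReal.le_sub_iff_add_le (Or.inl (EReal.coe_ne_bot _)) (Or.inl (EReal.coe_ne_top _)),
      ← EReal.coe_add] at this
  have hcg : ∀ I, ((c₂ + ε₂ * S I : ℝ) : EReal) ≤ vJ J (MvPowerSeries.coeff I g) := by
    intro I
    have := hc₂ I
    rwa [EReal.le_sub_iff_add_le (Or.inl (EReal.coe_ne_bot _)) (Or.inl (EReal.coe_ne_top _)),
      ← EReal.coe_add] at this
  have hε₁' : ∀ I, ε * S I ≤ ε₁ * S I := fun I =>
    mul_le_mul_of_nonneg_right (min_le_left _ _) (hS_nonneg I)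
  have hε₂' : ∀ I, ε * S I ≤ ε₂ * S I := fun I =>
    mul_le_mul_of_nonneg_right (min_le_right _ _) (hS_nonneg I)
  -- a generic way to conclude `gaussNorm ≠ ⊥` from a membership bound
  have key : ∀ (h : MvPowerSeries (Fin r) A) (C : ℝ),
      (∀ I, MvPowerSeries.coeff I h ∈ J ^ ⌊C + ε * S I⌋₊) →
      gaussNorm J ε h ≠ ⊥ := by
    intro h C hmem
    have hlow : ((C - 1 : ℝ) : EReal) ≤ gaussNorm J ε h := by
      apply le_iInf
      intro I
      rw [EReal.le_sub_iff_add_le (Or.inl (EReal.coe_ne_bot _)) (Or.inl (EReal.coe_ne_top _)),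
        ← EReal.coe_add]
      have := floor_le_vJ (hmem I)
      have heq : C + ε * S I - 1 = C - 1 + ε * S I := by ring
      rwa [heq] at this
    intro hb
    rw [hb, le_bot_iff] at hlow
    exact EReal.coe_ne_bot _ hlow
  constructor
  · refine ⟨ε, hε, key (f + g) (min c₁ c₂) ?_⟩
    intro I
    rw [map_add]
    apply Ideal.add_mem
    · exact mem_pow_floor (le_trans (by
        apply EReal.coe_le_coe_iff.mpr
        have := hε₁' I
        have := min_le_left c₁ c₂
        linarith) (hcf I))
    · exact mem_pow_floor (le_trans (by
        apply EReal.coe_le_coe_iff.mpr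
        have := hε₂' I
        have := min_le_right c₁ c₂
        linarith) (hcg I))
  · refine ⟨ε, hε, key (f * g) (c₁ + c₂ - 2) ?_⟩
    intro I
    rw [MvPowerSeries.coeff_mul]
    apply Ideal.sum_mem
    rintro ⟨I₁, I₂⟩ hp
    have hpI : I₁ + I₂ = I := Finset.HasAntidiagonal.mem_antidiagonal.mp hp
    set n₁ : ℕ := ⌊c₁ + ε₁ * S I₁⌋₊
    set n₂ : ℕ := ⌊c₂ + ε₂ * S I₂⌋₊
    have h₁ : MvPowerSeries.coeff I₁ f ∈ J ^ n₁ := mem_pow_floor (hcf I₁)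
    have h₂ : MvPowerSeries.coeff I₂ g ∈ J ^ n₂ := mem_pow_floor (hcg I₂)
    have hmul : MvPowerSeries.coeff I₁ f * MvPowerSeries.coeff I₂ g ∈ J ^ (n₁ + n₂) := by
      rw [pow_add]
      exact Ideal.mul_mem_mul h₁ h₂
    refine Ideal.pow_le_pow_right ?_ hmul
    -- ⌊c₁ + c₂ - 2 + ε * S I⌋₊ ≤ n₁ + n₂
    have hb₁ : c₁ + ε₁ * S I₁ - 1 < (n₁ : ℝ) := Nat.sub_one_lt_floor _
    have hb₂ : c₂ + ε₂ * S I₂ - 1 < (n₂ : ℝ) := Nat.sub_one_lt_floor _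
    have hSsum : S I = S I₁ + S I₂ := by rw [← hpI, hS_add]
    have hle : c₁ + c₂ - 2 + ε * S I ≤ ((n₁ + n₂ : ℕ) : ℝ) := by
      push_cast
      have h1 := hε₁' I₁  -- ε * S I₁ ≤ ε₁ * S I₁ — careful: hε₁' takes I
      have h2 := hε₂' I₂
      rw [hSsum]
      nlinarith [hε₁' I₁, hε₂' I₂]
    calc ⌊c₁ + c₂ - 2 + ε * S I⌋₊ ≤ ⌊((n₁ + n₂ : ℕ) : ℝ)⌋₊ := Nat.floor_le_floor hle
      _ = n₁ + n₂ := Nat.floor_natCast _
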